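/- For all integers l ≥ 2 and m ≥ 2: (i) the dehomogenization of F_{l,m} = (y^{l-1}·z − x^l)^m − x^{l·m−1}·y at the point p = [0:1:0], namely the polynomial (z − x^l)^m − x^{l·m−1} ∈ ℂ[x,z], has multiplicity m at the origin (its homogeneous component of degree n is zero for all n < m and its homogeneous component of degree m is nonzero); (ii) the dehomogenization at q = [0:0:1], namely (y^{l-1} − x^l)^m − x^{l·m−1}·y ∈ ℂ[x,y], has multiplicity (l−1)·m at the origin. -/
import Mathlib


open MvPolynomial

/-- `(z − x^l)^m − x^{l·m−1}`, the dehomogenization of `F_{l,m}` at `[0:1:0]`,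
as a polynomial in `ℂ[x,z]` with `x = X 0`, `z = X 1`. -/
noncomputable def Fdehom_p (l m : ℕ) : MvPolynomial (Fin 2) ℂ :=
  (X 1 - X 0 ^ l) ^ m - X 0 ^ (l * m - 1)

/-- `(y^{l-1} − x^l)^m − x^{l·m−1}·y`, the dehomogenization of `F_{l,m}` at `[0:0:1]`,
as a polynomial in `ℂ[x,y]` with `x = X 0`, `y = X 1`. -/
noncomputable def Fdehom_q (l m : ℕ) : MvPolynomial (Fin 2) ℂ :=
  (X 1 ^ (l - 1) - X 0 ^ l) ^ m - X 0 ^ (l * m - 1) * X 1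

/-- each binomial expansion term is homogeneous. -/
lemma term_isHomogeneous (a b c j : ℕ) :
    (((X 1 : MvPolynomial (Fin 2) ℂ) ^ a * (-(X 0 ^ b)) ^ c *
      (j : MvPolynomial (Fin 2) ℂ)).IsHomogeneous (a + b * c)) := by
  have h1 : ((X 1 : MvPolynomial (Fin 2) ℂ) ^ a).IsHomogeneous a := by
    simpa using (isHomogeneous_X ℂ (1 : Fin 2)).pow a
  have h2 : ((-(X 0 ^ b) : MvPolynomial (Fin 2) ℂ) ^ c).IsHomogeneous (b * c) := by
    have h := (((isHomogeneous_X ℂ (0 : Fin 2)).pow b).neg).pow c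
    simpa [mul_comm] using h
  have h3 : ((j : MvPolynomial (Fin 2) ℂ)).IsHomogeneous 0 := by
    rw [← map_natCast (C : ℂ →+* MvPolynomial (Fin 2) ℂ) j]
    exact isHomogeneous_C _ _
  simpa using (h1.mul h2).mul h3

lemma X1_pow_ne_zero (a : ℕ) : ((X 1 : MvPolynomial (Fin 2) ℂ) ^ a) ≠ 0 :=
  pow_ne_zero _ (X_ne_zero _)

theorem stmt_2 (l m : ℕ) (hl : 2 ≤ l) (hm : 2 ≤ m) :
    ((∀ n < m, homogeneousComponent n (Fdehom_p l m) = 0) ∧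
      homogeneousComponent m (Fdehom_p l m) ≠ 0) ∧
    ((∀ n < (l - 1) * m, homogeneousComponent n (Fdehom_q l m) = 0) ∧
      homogeneousComponent ((l - 1) * m) (Fdehom_q l m) ≠ 0) := by
  have h2m : 2 * m ≤ l * m := Nat.mul_le_mul_right m hl
  -- expansions
  have hp : ∀ n : ℕ, homogeneousComponent n (Fdehom_p l m) =
      (∑ k ∈ Finset.range (m + 1),
        if n = k + l * (m - k) then
          (X 1 : MvPolynomial (Fin 2) ℂ) ^ k * (-(X 0 ^ l)) ^ (m - k) *
            (m.choose k : MvPolynomial (Fin 2) ℂ) else 0) -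
      (if n = l * m - 1 then (X 0 : MvPolynomial (Fin 2) ℂ) ^ (l * m - 1) else 0) := by
    intro n
    rw [Fdehom_p, sub_eq_add_neg (X 1), add_pow, map_sub, map_sum]
    congr 1
    · exact Finset.sum_congr rfl fun k _ =>
        homogeneousComponent_of_mem (term_isHomogeneous k l (m - k) (m.choose k))
    · have hx : ((X 0 : MvPolynomial (Fin 2) ℂ) ^ (l * m - 1)).IsHomogeneous (l * m - 1) := by
        simpa using (isHomogeneous_X ℂ (0 : Fin 2)).pow (l * m - 1)
      exact homogeneousComponent_of_mem hx
  have hq : ∀ n : ℕ, homogeneousComponent n (Fdehom_q l m) =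
      (∑ k ∈ Finset.range (m + 1),
        if n = (l - 1) * k + l * (m - k) then
          (X 1 : MvPolynomial (Fin 2) ℂ) ^ ((l - 1) * k) * (-(X 0 ^ l)) ^ (m - k) *
            (m.choose k : MvPolynomial (Fin 2) ℂ) else 0) -
      (if n = l * m - 1 + 1 then
        (X 0 : MvPolynomial (Fin 2) ℂ) ^ (l * m - 1) * X 1 else 0) := by
    intro n
    rw [Fdehom_q, sub_eq_add_neg (X 1 ^ (l - 1)), add_pow, map_sub, map_sum]
    congr 1
    · refine Finset.sum_congr rfl fun k _ => ?_
      rw [← pow_mul]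
      exact homogeneousComponent_of_mem
        (term_isHomogeneous ((l - 1) * k) l (m - k) (m.choose k))
    · have hx : ((X 0 : MvPolynomial (Fin 2) ℂ) ^ (l * m - 1) *
          X 1).IsHomogeneous (l * m - 1 + 1) := by
        have h0 : ((X 0 : MvPolynomial (Fin 2) ℂ) ^ (l * m - 1)).IsHomogeneous (l * m - 1) := by
          simpa using (isHomogeneous_X ℂ (0 : Fin 2)).pow (l * m - 1)
        exact h0.mul (isHomogeneous_X ℂ (1 : Fin 2))
      exact homogeneousComponent_of_mem hx
  constructor
  · constructor
    · intro n hn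
      rw [hp n]
      have h1 : (∑ k ∈ Finset.range (m + 1),
          if n = k + l * (m - k) then
            (X 1 : MvPolynomial (Fin 2) ℂ) ^ k * (-(X 0 ^ l)) ^ (m - k) *
              (m.choose k : MvPolynomial (Fin 2) ℂ) else 0) = 0 := by
        refine Finset.sum_eq_zero fun k hk => ?_
        rw [if_neg]
        have hk' : k ≤ m := Nat.lt_succ_iff.mp (Finset.mem_range.mp hk)
        have : 2 * (m - k) ≤ l * (m - k) := Nat.mul_le_mul_right _ hl
        omega
      rw [h1, if_neg (by omega), sub_zero]
    · rw [hp m]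
      have h1 : (∑ k ∈ Finset.range (m + 1),
          if m = k + l * (m - k) then
            (X 1 : MvPolynomial (Fin 2) ℂ) ^ k * (-(X 0 ^ l)) ^ (m - k) *
              (m.choose k : MvPolynomial (Fin 2) ℂ) else 0) = X 1 ^ m := by
        rw [Finset.sum_eq_single_of_mem m (Finset.self_mem_range_succ m)]
        · simp
        · intro k hk hkm
          rw [if_neg]
          have hk' : k ≤ m := Nat.lt_succ_iff.mp (Finset.mem_range.mp hk)
          have : 2 * (m - k) ≤ l * (m - k) := Nat.mul_le_mul_right _ hl
          omega
      rw [h1, if_neg (by omega), sub_zero]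
      exact X1_pow_ne_zero m
  · constructor
    · intro n hn
      rw [hq n]
      have hAB : (l - 1) * m + m = l * m := by
        obtain ⟨l1, rfl⟩ : ∃ l1, l = l1 + 1 := ⟨l - 1, by omega⟩
        simp only [Nat.add_sub_cancel]; ring
      have h1 : (∑ k ∈ Finset.range (m + 1),
          if n = (l - 1) * k + l * (m - k) then
            (X 1 : MvPolynomial (Fin 2) ℂ) ^ ((l - 1) * k) * (-(X 0 ^ l)) ^ (m - k) *
              (m.choose k : MvPolynomial (Fin 2) ℂ) else 0) = 0 := by
        refine Finset.sum_eq_zero fun k hk => ?_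
        have hk' : k ≤ m := Nat.lt_succ_iff.mp (Finset.mem_range.mp hk)
        have hdk : (l - 1) * k + l * (m - k) = (l - 1) * m + (m - k) := by
          obtain ⟨d, rfl⟩ : ∃ d, m = k + d := ⟨m - k, by omega⟩
          obtain ⟨l1, rfl⟩ : ∃ l1, l = l1 + 1 := ⟨l - 1, by omega⟩
          simp only [Nat.add_sub_cancel, Nat.add_sub_cancel_left]
          ring
        rw [if_neg (by omega)]
      rw [h1, if_neg (by omega), sub_zero]
    · rw [hq ((l - 1) * m)]
      have hAB : (l - 1) * m + m = l * m := by
        obtain ⟨l1, rfl⟩ : ∃ l1, l = l1 + 1 := ⟨l - 1, by omega⟩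
        simp only [Nat.add_sub_cancel]; ring
      have h1 : (∑ k ∈ Finset.range (m + 1),
          if (l - 1) * m = (l - 1) * k + l * (m - k) then
            (X 1 : MvPolynomial (Fin 2) ℂ) ^ ((l - 1) * k) * (-(X 0 ^ l)) ^ (m - k) *
              (m.choose k : MvPolynomial (Fin 2) ℂ) else 0) = X 1 ^ ((l - 1) * m) := by
        rw [Finset.sum_eq_single_of_mem m (Finset.self_mem_range_succ m)]
        · simp
        · intro k hk hkm
          have hk' : k ≤ m := Nat.lt_succ_iff.mp (Finset.mem_range.mp hk)
          have hdk : (l - 1) * k + l * (m - k) = (l - 1) * m + (m - k) := by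
            obtain ⟨d, rfl⟩ : ∃ d, m = k + d := ⟨m - k, by omega⟩
            obtain ⟨l1, rfl⟩ : ∃ l1, l = l1 + 1 := ⟨l - 1, by omega⟩
            simp only [Nat.add_sub_cancel, Nat.add_sub_cancel_left]
            ring
          rw [if_neg (by omega)]
      rw [h1, if_neg (by omega), sub_zero]
      exact X1_pow_ne_zero _
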